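/- For integers m, p, t ≥ 1 consider the Cameron–Walker graph G^{(1)}_{m,p,t} whose bipartite part is K_{m,p}, with s_1 = ... = s_m = 1, t_1 = ... = t_{p−1} = 1, and t_p = t. Then |V(G)| = 2m + 3p + 2t − 2, the independence number of G equals m + p + t − 1, and i(G) = m + p. -/

import Mathlib

/-- A finite set of vertices is independent in `G` if no two of its members are adjacent. -/
def SimpleGraph.IsIndepFinset {V : Type*} (G : SimpleGraph V) (A : Finset V) : Prop :=
  ∀ u ∈ A, ∀ v ∈ A, ¬ G.Adj u v

/-- `A` is an independent dominating set of `G`: `A` is independent and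
`A ∪ N_G(A) = V(G)`, i.e. every vertex is in `A` or adjacent to a member of `A`. -/
def SimpleGraph.IsIndepDomFinset {V : Type*} (G : SimpleGraph V) (A : Finset V) : Prop :=
  G.IsIndepFinset A ∧ ∀ v : V, v ∈ A ∨ ∃ u ∈ A, G.Adj u v

/-- The vertex set of a Cameron–Walker graph in standard form:
the `vᵢ` (`i : Fin m`), the `w_j` (`j : Fin p`), the `sᵢ` leaves attached to `vᵢ`,
and the two extra vertices of each of the `t_j` pendant triangles attached to `w_j`. -/
abbrev CWVert (m p : ℕ) (s : Fin m → ℕ) (t : Fin p → ℕ) : Type :=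
  (Fin m) ⊕ (Fin p) ⊕ (Σ i : Fin m, Fin (s i)) ⊕ (Σ j : Fin p, Fin (t j) × Fin 2)

/-- The Cameron–Walker graph in standard form: a bipartite graph between the `vᵢ`
and the `w_j` with edge relation `E`, together with `sᵢ` pendant leaves at each `vᵢ`
and `t_j` pendant triangles at each `w_j`. -/
def CWGraph (m p : ℕ) (E : Fin m → Fin p → Prop) (s : Fin m → ℕ) (t : Fin p → ℕ) :
    SimpleGraph (CWVert m p s t) :=
  SimpleGraph.fromRel (fun u v =>
    match u, v with
    | Sum.inl i, Sum.inr (Sum.inl j) => E i j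
    | Sum.inl i, Sum.inr (Sum.inr (Sum.inl ⟨i', _⟩)) => i = i'
    | Sum.inr (Sum.inl j), Sum.inr (Sum.inr (Sum.inr ⟨j', _⟩)) => j = j'
    | Sum.inr (Sum.inr (Sum.inr ⟨j, l, _⟩)), Sum.inr (Sum.inr (Sum.inr ⟨j', l', _⟩)) =>
        j = j' ∧ HEq l l'
    | _, _ => False)

/-- The bipartite part of the Cameron–Walker graph, as a graph on `{v₁,…,vₘ} ∪ {w₁,…,w_p}`. -/
def CWBip (m p : ℕ) (E : Fin m → Fin p → Prop) : SimpleGraph ((Fin m) ⊕ (Fin p)) :=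
  SimpleGraph.fromRel (fun u v =>
    match u, v with
    | Sum.inl i, Sum.inr j => E i j
    | _, _ => False)

set_option linter.dupNamespace false

namespace CWaux

variable {m p : ℕ} {E : Fin m → Fin p → Prop} {s : Fin m → ℕ} {t : Fin p → ℕ}

/-- vertex abbreviations -/
abbrev V (i : Fin m) : CWVert m p s t := Sum.inl i
abbrev W (j : Fin p) : CWVert m p s t := Sum.inr (Sum.inl j)
abbrev L (i : Fin m) (k : Fin (s i)) : CWVert m p s t := Sum.inr (Sum.inr (Sum.inl ⟨i, k⟩))
abbrev T (j : Fin p) (l : Fin (t j)) (c : Fin 2) : CWVert m p s t :=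
  Sum.inr (Sum.inr (Sum.inr ⟨j, (l, c)⟩))

lemma notAdj_VV (i i' : Fin m) : ¬ (CWGraph m p E s t).Adj (V i) (V i') := by
  simp [CWGraph, SimpleGraph.fromRel_adj]

lemma notAdj_WW (j j' : Fin p) : ¬ (CWGraph m p E s t).Adj (W j) (W j') := by
  simp [CWGraph, SimpleGraph.fromRel_adj]

lemma notAdj_LL (i i' : Fin m) (k : Fin (s i)) (k' : Fin (s i')) :
    ¬ (CWGraph m p E s t).Adj (L i k) (L i' k') := by
  simp [CWGraph, SimpleGraph.fromRel_adj]

lemma notAdj_LW (i : Fin m) (k : Fin (s i)) (j : Fin p) :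
    ¬ (CWGraph m p E s t).Adj (L i k) (W j) := by
  simp [CWGraph, SimpleGraph.fromRel_adj]

lemma notAdj_LT (i : Fin m) (k : Fin (s i)) (j : Fin p) (l : Fin (t j)) (c : Fin 2) :
    ¬ (CWGraph m p E s t).Adj (L i k) (T j l c) := by
  simp [CWGraph, SimpleGraph.fromRel_adj]

lemma notAdj_VT (i : Fin m) (j : Fin p) (l : Fin (t j)) (c : Fin 2) :
    ¬ (CWGraph m p E s t).Adj (V i) (T j l c) := by
  simp [CWGraph, SimpleGraph.fromRel_adj]

lemma adj_VW (i : Fin m) (j : Fin p) (h : E i j) :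
    (CWGraph m p E s t).Adj (V i) (W j) := by
  simp [CWGraph, SimpleGraph.fromRel_adj, h]

lemma adj_VL (i : Fin m) (k : Fin (s i)) :
    (CWGraph m p E s t).Adj (V i) (L i k) := by
  simp [CWGraph, SimpleGraph.fromRel_adj]

lemma adj_WT (j : Fin p) (l : Fin (t j)) (c : Fin 2) :
    (CWGraph m p E s t).Adj (W j) (T j l c) := by
  simp [CWGraph, SimpleGraph.fromRel_adj]

lemma adj_TT_iff (j j' : Fin p) (l : Fin (t j)) (l' : Fin (t j')) (c c' : Fin 2) :
    (CWGraph m p E s t).Adj (T j l c) (T j' l' c') ↔ j = j' ∧ HEq l l' ∧ c ≠ c' := by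
  constructor
  · intro h
    obtain ⟨hne, h1 | h1⟩ := h
    · refine ⟨h1.1, h1.2, ?_⟩
      rintro rfl
      obtain ⟨rfl, h2⟩ := h1
      cases eq_of_heq h2
      exact hne rfl
    · refine ⟨h1.1.symm, h1.2.symm, ?_⟩
      rintro rfl
      obtain ⟨rfl, h2⟩ := h1
      cases eq_of_heq h2
      exact hne rfl
  · rintro ⟨rfl, h2, h3⟩
    cases eq_of_heq h2
    exact ⟨by simp [h3], Or.inl ⟨rfl, HEq.rfl⟩⟩

lemma adj_VL_iff (i i' : Fin m) (k : Fin (s i')) :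
    (CWGraph m p E s t).Adj (V i) (L i' k) ↔ i = i' := by
  constructor
  · rintro ⟨hne, h1 | h1⟩
    · exact h1
    · exact absurd h1 (by simp)
  · rintro rfl; exact adj_VL i k

lemma adj_WT_iff (j j' : Fin p) (l : Fin (t j')) (c : Fin 2) :
    (CWGraph m p E s t).Adj (W j) (T j' l c) ↔ j = j' := by
  constructor
  · rintro ⟨hne, h1 | h1⟩
    · exact h1
    · exact absurd h1 (by simp)
  · rintro rfl; exact adj_WT j l c

lemma adj_to_leaf {u : CWVert m p s t} {i : Fin m} {k : Fin (s i)}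
    (h : (CWGraph m p E s t).Adj u (L i k)) : u = V i := by
  rcases u with i' | j' | ⟨i', k'⟩ | ⟨j', l', c'⟩
  · rcases (adj_VL_iff i' i k).mp h with rfl; rfl
  · exact absurd h.symm (notAdj_LW i k j')
  · exact absurd h (notAdj_LL i' i k' k)
  · exact absurd h.symm (notAdj_LT i k j' l' c')

lemma adj_to_tri {u : CWVert m p s t} {j : Fin p} {l : Fin (t j)} {c : Fin 2}
    (h : (CWGraph m p E s t).Adj u (T j l c)) :
    u = W j ∨ ∃ c', u = T j l c' := by
  rcases u with i' | j' | ⟨i', k'⟩ | ⟨j', l', c'⟩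
  · exact absurd h (notAdj_VT i' j l c)
  · rcases (adj_WT_iff j' j l c).mp h with rfl; exact Or.inl rfl
  · exact absurd h (notAdj_LT i' k' j l c)
  · obtain ⟨rfl, h2, -⟩ := (adj_TT_iff j' j l' l c' c).mp h
    cases eq_of_heq h2
    exact Or.inr ⟨c', rfl⟩

/-- The "block" of a vertex, used to bound independent sets. -/
def blk (ht0 : ∀ j, 0 < t j) : CWVert m p s t → Fin m ⊕ Σ j : Fin p, Fin (t j)
  | Sum.inl i => Sum.inl i
  | Sum.inr (Sum.inl j) => Sum.inr ⟨j, ⟨0, ht0 j⟩⟩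
  | Sum.inr (Sum.inr (Sum.inl ⟨i, _⟩)) => Sum.inl i
  | Sum.inr (Sum.inr (Sum.inr ⟨j, l, _⟩)) => Sum.inr ⟨j, l⟩

/-- The classifier of a vertex, used to bound dominating sets. -/
def cls : CWVert m p s t → Fin m ⊕ Fin p
  | Sum.inl i => Sum.inl i
  | Sum.inr (Sum.inl j) => Sum.inr j
  | Sum.inr (Sum.inr (Sum.inl ⟨i, _⟩)) => Sum.inl i
  | Sum.inr (Sum.inr (Sum.inr ⟨j, _, _⟩)) => Sum.inr j

lemma indep_card_le (hs : ∀ i, s i ≤ 1) (ht0 : ∀ j, 0 < t j)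
    {A : Finset (CWVert m p s t)} (hind : (CWGraph m p E s t).IsIndepFinset A) :
    A.card ≤ m + ∑ j : Fin p, t j := by
  classical
  have hinj : Set.InjOn (blk ht0) (↑A : Set (CWVert m p s t)) := by
    intro u hu v hv heq
    by_contra hne
    rcases u with i | j | ⟨i, k⟩ | ⟨j, l, c⟩ <;>
      rcases v with i' | j' | ⟨i', k'⟩ | ⟨j', l', c'⟩ <;>
      simp only [blk] at heq
    · injection heq with h; subst h; exact hne rfl
    · simp at heq
    · injection heq with h; subst h
      exact hind _ hu _ hv (adj_VL i k')
    · simp at heq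
    · simp at heq
    · injection heq with h
      obtain ⟨rfl, -⟩ := Sigma.mk.inj_iff.mp h
      exact hne rfl
    · simp at heq
    · injection heq with h
      obtain ⟨rfl, h2⟩ := Sigma.mk.inj_iff.mp h
      obtain rfl := eq_of_heq h2.symm
      exact hind _ hu _ hv (adj_WT j _ c')
    · injection heq with h; subst h
      exact hind _ hv _ hu (adj_VL _ k)
    · simp at heq
    · injection heq with h; subst h
      have hk : k = k' := by
        have h1 := hs i
        have h2 := k.isLt
        have h3 := k'.isLt
        exact Fin.ext (by omega)
      subst hk
      exact hne rfl
    · simp at heq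
    · simp at heq
    · injection heq with h
      obtain ⟨rfl, h2⟩ := Sigma.mk.inj_iff.mp h
      obtain rfl := eq_of_heq h2
      exact hind _ hv _ hu (adj_WT j _ c)
    · simp at heq
    · injection heq with h
      obtain ⟨rfl, h2⟩ := Sigma.mk.inj_iff.mp h
      obtain rfl := eq_of_heq h2
      by_cases hcc : c = c'
      · exact hne (by rw [hcc])
      · exact hind _ hu _ hv ((adj_TT_iff j j l l c c').mpr ⟨rfl, HEq.rfl, hcc⟩)
  calc A.card = (A.image (blk ht0)).card := (Finset.card_image_of_injOn hinj).symm
    _ ≤ Fintype.card (Fin m ⊕ Σ j : Fin p, Fin (t j)) := by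
        rw [← Finset.card_univ]
        exact Finset.card_le_card (Finset.subset_univ _)
    _ = m + ∑ j : Fin p, t j := by simp

lemma dom_card_ge (hs0 : ∀ i, 0 < s i) (ht0 : ∀ j, 0 < t j)
    {A : Finset (CWVert m p s t)}
    (hdom : ∀ v, v ∈ A ∨ ∃ u ∈ A, (CWGraph m p E s t).Adj u v) :
    m + p ≤ A.card := by
  classical
  have key : ∀ x : Fin m ⊕ Fin p, ∃ u, u ∈ A ∧ cls u = x := by
    rintro (i | j)
    · rcases hdom (L i ⟨0, hs0 i⟩) with h | ⟨u, hu, hadj⟩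
      · exact ⟨_, h, rfl⟩
      · obtain rfl := adj_to_leaf hadj
        exact ⟨_, hu, rfl⟩
    · rcases hdom (T j ⟨0, ht0 j⟩ 0) with h | ⟨u, hu, hadj⟩
      · exact ⟨_, h, rfl⟩
      · rcases adj_to_tri hadj with rfl | ⟨c', rfl⟩
        · exact ⟨_, hu, rfl⟩
        · exact ⟨_, hu, rfl⟩
  choose a ha hcls using key
  have hinj : Function.Injective a := by
    intro x y hxy
    rw [← hcls x, ← hcls y, hxy]
  calc m + p = (Finset.univ : Finset (Fin m ⊕ Fin p)).card := by simp
    _ ≤ A.card := Finset.card_le_card_of_injOn a (fun x _ => ha x) (hinj.injOn)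

lemma sum_tp (p t : ℕ) (hp : 1 ≤ p) (ht : 1 ≤ t) :
    ∑ j : Fin p, (if (j : ℕ) = p - 1 then t else 1) = p + t - 1 := by
  have : ∀ j : Fin p, (if (j : ℕ) = p - 1 then t else 1)
      = 1 + (if j = (⟨p - 1, by omega⟩ : Fin p) then t - 1 else 0) := by
    intro j
    by_cases h : (j : ℕ) = p - 1
    · rw [if_pos h, if_pos (Fin.ext h)]; omega
    · rw [if_neg h, if_neg (fun hc => h (by rw [hc]))]
  rw [Finset.sum_congr rfl (fun j _ => this j), Finset.sum_add_distrib]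
  simp [Finset.sum_ite_eq']
  omega

end CWaux

open CWaux in
/-- the Cameron–Walker graph `G⁽¹⁾_{m,p,t}` (bipartite part `K_{m,p}`,
one leaf at each `vᵢ`, one pendant triangle at each of `w₁,…,w_{p−1}`, and `t`
pendant triangles at `w_p`) has `2m + 3p + 2t − 2` vertices, independence number
`m + p + t − 1`, and `i(G) = m + p`. -/
theorem stmt_18 (m p t : ℕ) (hm : 1 ≤ m) (hp : 1 ≤ p) (ht : 1 ≤ t) :
    Fintype.card (CWVert m p (fun _ => 1) (fun j => if (j : ℕ) = p - 1 then t else 1))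
        = 2 * m + 3 * p + 2 * t - 2 ∧
    IsGreatest {k : ℕ | ∃ A : Finset (CWVert m p (fun _ => 1)
          (fun j => if (j : ℕ) = p - 1 then t else 1)),
        (CWGraph m p (fun _ _ => True) (fun _ => 1)
          (fun j => if (j : ℕ) = p - 1 then t else 1)).IsIndepFinset A ∧ A.card = k}
      (m + p + t - 1) ∧
    IsLeast {k : ℕ | ∃ A : Finset (CWVert m p (fun _ => 1)
          (fun j => if (j : ℕ) = p - 1 then t else 1)),
        (CWGraph m p (fun _ _ => True) (fun _ => 1)
          (fun j => if (j : ℕ) = p - 1 then t else 1)).IsIndepDomFinset A ∧ A.card = k}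
      (m + p) := by
  classical
  set s₀ : Fin m → ℕ := fun _ => 1 with hs₀
  set t₀ : Fin p → ℕ := fun j => if (j : ℕ) = p - 1 then t else 1 with ht₀
  have ht0 : ∀ j, 0 < t₀ j := by
    intro j; simp only [ht₀]; split <;> omega
  have hs1 : ∀ i, s₀ i ≤ 1 := fun _ => le_refl 1
  have hs0 : ∀ i, 0 < s₀ i := fun _ => Nat.one_pos
  have hsum : ∑ j : Fin p, t₀ j = p + t - 1 := sum_tp p t hp ht
  refine ⟨?_, ⟨?_, ?_⟩, ⟨?_, ?_⟩⟩
  · -- cardinality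
    have : Fintype.card (CWVert m p s₀ t₀)
        = m + (p + ((∑ i : Fin m, s₀ i) + ∑ j : Fin p, (t₀ j * 2))) := by
      simp [Fintype.card_sum, Fintype.card_sigma, hs₀]
    rw [this, ← Finset.sum_mul, hsum]
    simp only [hs₀, Finset.sum_const, Finset.card_univ, Fintype.card_fin, smul_eq_mul,
      mul_one]
    omega
  · -- independent set of size m + p + t - 1
    refine ⟨(Finset.univ.image fun i : Fin m => (L i ⟨0, hs0 i⟩ : CWVert m p s₀ t₀)) ∪
      (Finset.univ.image fun x : Σ j : Fin p, Fin (t₀ j) => (T x.1 x.2 0 : CWVert m p s₀ t₀)),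
      ?_, ?_⟩
    · intro u hu v hv hadj
      simp only [Finset.mem_union, Finset.mem_image, Finset.mem_univ, true_and] at hu hv
      rcases hu with ⟨i, rfl⟩ | ⟨⟨j, l⟩, rfl⟩ <;> rcases hv with ⟨i', rfl⟩ | ⟨⟨j', l'⟩, rfl⟩
      · exact notAdj_LL i i' _ _ hadj
      · exact notAdj_LT i _ j' l' 0 hadj
      · exact notAdj_LT i' _ j l 0 hadj.symm
      · obtain ⟨-, -, h3⟩ := (adj_TT_iff j j' l l' 0 0).mp hadj
        exact h3 rfl
    · rw [Finset.card_union_of_disjoint, Finset.card_image_of_injective,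
        Finset.card_image_of_injective]
      · simp only [Finset.card_univ, Fintype.card_fin, Fintype.card_sigma]
        rw [hsum]; omega
      · rintro ⟨j, l⟩ ⟨j', l'⟩ hxy
        simp only [Sum.inr.injEq, Sigma.mk.inj_iff] at hxy
        obtain ⟨rfl, h2⟩ := hxy
        cases congrArg Prod.fst (eq_of_heq h2)
        rfl
      · intro x y hxy
        simpa using hxy
      · rw [Finset.disjoint_left]
        rintro x hx hx'
        simp only [Finset.mem_image, Finset.mem_univ, true_and] at hx hx'
        obtain ⟨i, rfl⟩ := hx
        obtain ⟨y, hy⟩ := hx'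
        simp at hy
  · -- upper bound
    rintro k ⟨A, hind, rfl⟩
    have := indep_card_le (E := fun _ _ => True) hs1 ht0 hind
    rw [hsum] at this
    omega
  · -- dominating independent set of size m + p
    refine ⟨(Finset.univ.image fun i : Fin m => (L i ⟨0, hs0 i⟩ : CWVert m p s₀ t₀)) ∪
      (Finset.univ.image fun j : Fin p => (W j : CWVert m p s₀ t₀)), ⟨?_, ?_⟩, ?_⟩
    · intro u hu v hv hadj
      simp only [Finset.mem_union, Finset.mem_image, Finset.mem_univ, true_and] at hu hv
      rcases hu with ⟨i, rfl⟩ | ⟨j, rfl⟩ <;> rcases hv with ⟨i', rfl⟩ | ⟨j', rfl⟩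
      · exact notAdj_LL i i' _ _ hadj
      · exact notAdj_LW i _ j' hadj
      · exact notAdj_LW i' _ j hadj.symm
      · exact notAdj_WW j j' hadj
    · intro v
      rcases v with i | j | ⟨i, k⟩ | ⟨j, l, c⟩
      · refine Or.inr ⟨W ⟨0, hp⟩, ?_, (adj_VW i ⟨0, hp⟩ trivial).symm⟩
        simp
      · exact Or.inl (by simp)
      · left
        have : k = ⟨0, hs0 i⟩ := Fin.ext (by
          show (k : ℕ) = 0
          have hk : (k : ℕ) < 1 := k.isLt
          omega)
        subst this
        simp only [Finset.mem_union, Finset.mem_image, Finset.mem_univ, true_and]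
        exact Or.inl ⟨i, rfl⟩
      · exact Or.inr ⟨W j, by simp, adj_WT (m := m) (E := fun _ _ => True) (s := s₀) (t := t₀) j l c⟩
    · rw [Finset.card_union_of_disjoint, Finset.card_image_of_injective,
        Finset.card_image_of_injective]
      · simp
      · intro x y hxy; simpa using hxy
      · intro x y hxy; simpa using hxy
      · rw [Finset.disjoint_left]
        rintro x hx hx'
        simp only [Finset.mem_image, Finset.mem_univ, true_and] at hx hx'
        obtain ⟨i, rfl⟩ := hx
        obtain ⟨j, hj⟩ := hx'
        simp at hj
  · -- lower bound
    rintro k ⟨A, ⟨-, hdom⟩, rfl⟩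
    exact dom_card_ge (E := fun _ _ => True) hs0 ht0 hdom
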